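/- In the interdomain routing game on nodes {1,2,3,d} where each node i ∈ {1,2,3} chooses a next hop among its neighbors, utilities are determined by the induced path to d with preferences u_1(132d) > u_1(1d) > u_1(13d), u_2(213d) > u_2(2d) > u_2(21d), u_3(321d) > u_3(3d) > u_3(32d), and utility −∞ (worse than all paths) for any other outcome, the profile where all of 1, 2, 3 forward directly to d is the unique pure Nash equilibrium, and from every strategy profile there is a best-response improvement path reaching it (the game is weakly acyclic under best response), even though the game contains a best-response cycle of length 6. -/

import Mathlib

section Defs

variable {n : ℕ} {S : Fin n → Type*}

/-- A better-response transition: `s'` differs from `s` only in player `i`'s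
strategy, which strictly improves `i`'s utility. -/
def IsBetter (u : ∀ i : Fin n, (∀ j, S j) → ℝ) (s s' : ∀ j, S j) : Prop :=
  ∃ i, s' = Function.update s i (s' i) ∧ s' i ≠ s i ∧ u i s < u i s'

/-- A best-response transition: additionally the new strategy maximizes
`i`'s utility against the others' strategies. -/
def IsBest (u : ∀ i : Fin n, (∀ j, S j) → ℝ) (s s' : ∀ j, S j) : Prop :=
  ∃ i, s' = Function.update s i (s' i) ∧ s' i ≠ s i ∧ u i s < u i s' ∧
    ∀ t : S i, u i (Function.update s i t) ≤ u i s'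

/-- Pure Nash equilibrium. -/
def IsNash (u : ∀ i : Fin n, (∀ j, S j) → ℝ) (s : ∀ j, S j) : Prop :=
  ∀ i, ∀ t : S i, u i (Function.update s i t) ≤ u i s

/-- Weak acyclicity (under better response). -/
def WeaklyAcyclic (u : ∀ i : Fin n, (∀ j, S j) → ℝ) : Prop :=
  ∀ s, ∃ e, Relation.ReflTransGen (IsBetter u) s e ∧ IsNash u e

/-- Weak acyclicity under best response. -/
def WeaklyAcyclicBest (u : ∀ i : Fin n, (∀ j, S j) → ℝ) : Prop :=
  ∀ s, ∃ e, Relation.ReflTransGen (IsBest u) s e ∧ IsNash u e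

/-- Membership of a profile in the subgame given by strategy sets `T`. -/
def InSub (T : ∀ i, Set (S i)) (s : ∀ j, S j) : Prop := ∀ i, s i ∈ T i

/-- Pure Nash equilibrium of the subgame given by `T`. -/
def IsNashOn (u : ∀ i : Fin n, (∀ j, S j) → ℝ) (T : ∀ i, Set (S i)) (s : ∀ j, S j) : Prop :=
  InSub T s ∧ ∀ i, ∀ t ∈ T i, u i (Function.update s i t) ≤ u i s

/-- Best-response transition within the subgame given by `T`. -/
def IsBestOn (u : ∀ i : Fin n, (∀ j, S j) → ℝ) (T : ∀ i, Set (S i)) (s s' : ∀ j, S j) : Prop :=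
  InSub T s ∧ InSub T s' ∧ ∃ i, s' = Function.update s i (s' i) ∧ s' i ≠ s i ∧
    u i s < u i s' ∧ ∀ t ∈ T i, u i (Function.update s i t) ≤ u i s'

/-- Subgame stability: every subgame has a pure Nash equilibrium. -/
def SubgameStable (u : ∀ i : Fin n, (∀ j, S j) → ℝ) : Prop :=
  ∀ T : ∀ i, Set (S i), (∀ i, (T i).Nonempty) → ∃ s, IsNashOn u T s

/-- Unique subgame stability: every subgame has exactly one pure Nash equilibrium. -/
def USS (u : ∀ i : Fin n, (∀ j, S j) → ℝ) : Prop :=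
  ∀ T : ∀ i, Set (S i), (∀ i, (T i).Nonempty) → ∃! s, IsNashOn u T s

/-- Strict game: no player is indifferent between two of its own strategies
against a fixed profile of the others. -/
def StrictGame (u : ∀ i : Fin n, (∀ j, S j) → ℝ) : Prop :=
  ∀ i (s : ∀ j, S j) (t : S i), t ≠ s i → u i (Function.update s i t) ≠ u i s

/-- Reachability by best-response improvement paths. -/
def BRReach (u : ∀ i : Fin n, (∀ j, S j) → ℝ) (s t : ∀ j, S j) : Prop :=
  Relation.ReflTransGen (IsBest u) s t

/-- The (strategy sets of the) subgame spanned by `BR_Γ(s)`. -/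
def SpanBR (u : ∀ i : Fin n, (∀ j, S j) → ℝ) (s : ∀ j, S j) : ∀ i, Set (S i) :=
  fun i => {x | ∃ t, BRReach u s t ∧ t i = x}

/-- A sink of the best-response dynamics: a nonempty set of profiles closed
under best-response transitions and strongly connected. -/
def IsSinkBest (u : ∀ i : Fin n, (∀ j, S j) → ℝ) (X : Set (∀ j, S j)) : Prop :=
  X.Nonempty ∧ (∀ s ∈ X, ∀ s', IsBest u s s' → s' ∈ X) ∧
    ∀ s ∈ X, ∀ s' ∈ X, Relation.ReflTransGen (IsBest u) s s'

end Defs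

/-- Strategy set of node `i ∈ {1,2,3}` (indexed `0,1,2`): a next hop, which is
another node (`some j`, `j ≠ i`) or the destination `d` (`none`). -/
def Hop (i : Fin 3) : Type := {x : Option (Fin 3) // x ≠ some i}

/-- Utilities of the interdomain routing game: node `0` (i.e. node 1) prefers
the path `132d`, then `1d`, then `13d`; cyclically for the others; all other
outcomes (including having no path to `d`) get the bottom utility `0`. -/
def ru : ∀ i : Fin 3, (∀ j, Hop j) → ℝ := fun i s =>
  if i = 0 then
    if (s 0).1 = none then 2
    else if (s 0).1 = some 2 ∧ (s 2).1 = none then 1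
    else if (s 0).1 = some 2 ∧ (s 2).1 = some 1 ∧ (s 1).1 = none then 3
    else 0
  else if i = 1 then
    if (s 1).1 = none then 2
    else if (s 1).1 = some 0 ∧ (s 0).1 = none then 1
    else if (s 1).1 = some 0 ∧ (s 0).1 = some 2 ∧ (s 2).1 = none then 3
    else 0
  else
    if (s 2).1 = none then 2
    else if (s 2).1 = some 1 ∧ (s 1).1 = none then 1
    else if (s 2).1 = some 1 ∧ (s 1).1 = some 0 ∧ (s 0).1 = none then 3
    else 0

/-- The profile where every node forwards directly to `d`. -/
def allToD : ∀ j, Hop j := fun j => ⟨none, by simp⟩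

/-! ### Auxiliary machinery -/

/-- Sanitize a next-hop value into a legal strategy of node `i`. -/
def ok (i : Fin 3) (x : Option (Fin 3)) : Hop i :=
  if h : x = some i then ⟨none, nofun⟩ else ⟨x, h⟩

/-- The profile with given next-hop values. -/
def P (a b c : Option (Fin 3)) : ∀ j : Fin 3, Hop j
  | ⟨0, _⟩ => ok 0 a
  | ⟨1, _⟩ => ok 1 b
  | ⟨2, _⟩ => ok 2 c

lemma ok_val (i : Fin 3) (t : Hop i) : ok i t.1 = t := by
  obtain ⟨x, h⟩ := t
  simp [ok, h]; rfl

lemma hop_cases (i : Fin 3) (t : Hop i) :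
    t.1 = none ∨ t.1 = some (i + 1) ∨ t.1 = some (i + 2) := by
  obtain ⟨x, h⟩ := t
  rcases x with _ | j
  · left; rfl
  · right
    simp only [Option.some.injEq] at h ⊢
    fin_cases i <;> fin_cases j <;> simp_all

lemma hop0c (t : Hop 0) : t.1 = none ∨ t.1 = some 1 ∨ t.1 = some 2 := by
  simpa using hop_cases 0 t

lemma hop1c (t : Hop 1) : t.1 = none ∨ t.1 = some 2 ∨ t.1 = some 0 := by
  simpa using hop_cases 1 t

lemma hop2c (t : Hop 2) : t.1 = none ∨ t.1 = some 0 ∨ t.1 = some 1 := by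
  simpa using hop_cases 2 t

lemma ext_P (s : ∀ j, Hop j) : s = P (s 0).1 (s 1).1 (s 2).1 := by
  funext j
  fin_cases j <;> simp [P, ok_val] <;> rfl

lemma P_ddd : P none none none = allToD := by
  funext j
  fin_cases j <;> rfl

lemma best_step (s : ∀ j, Hop j) (i : Fin 3) (t : Hop i) (h1 : t.1 ≠ (s i).1)
    (h2 : ru i s < ru i (Function.update s i t))
    (h3 : ∀ t', ru i (Function.update s i t') ≤ ru i (Function.update s i t)) :
    IsBest ru s (Function.update s i t) :=
  ⟨i, by rw [Function.update_self], by
      rw [Function.update_self]; exact fun e => h1 (congrArg Subtype.val e), h2, h3⟩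

lemma upd0 (a b c : Option (Fin 3)) (t : Hop 0) :
    Function.update (P a b c) 0 t = P t.1 b c := by
  funext j
  fin_cases j <;> simp [Function.update, P, ok_val]

lemma upd1 (a b c : Option (Fin 3)) (t : Hop 1) :
    Function.update (P a b c) 1 t = P a t.1 c := by
  funext j
  fin_cases j <;> simp [Function.update, P, ok_val]

lemma upd2 (a b c : Option (Fin 3)) (t : Hop 2) :
    Function.update (P a b c) 2 t = P a b t.1 := by
  funext j
  fin_cases j <;> simp [Function.update, P, ok_val]

lemma step0 {a a' b c : Option (Fin 3)} (hne : a' ≠ some 0) (h1 : (ok 0 a').1 ≠ (ok 0 a).1)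
    (h2 : ru 0 (P a b c) < ru 0 (P a' b c))
    (h3 : ∀ t' : Hop 0, ru 0 (Function.update (P a b c) 0 t') ≤ ru 0 (P a' b c)) :
    IsBest ru (P a b c) (P a' b c) := by
  have e : P a' b c = Function.update (P a b c) 0 (ok 0 a') := by
    rw [upd0]; have : (ok 0 a').1 = a' := by simp [ok, hne]
    rw [this]
  rw [e] at h2 h3 ⊢
  exact best_step _ 0 (ok 0 a') h1 h2 h3

lemma step1 {a b b' c : Option (Fin 3)} (hne : b' ≠ some 1) (h1 : (ok 1 b').1 ≠ (ok 1 b).1)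
    (h2 : ru 1 (P a b c) < ru 1 (P a b' c))
    (h3 : ∀ t' : Hop 1, ru 1 (Function.update (P a b c) 1 t') ≤ ru 1 (P a b' c)) :
    IsBest ru (P a b c) (P a b' c) := by
  have e : P a b' c = Function.update (P a b c) 1 (ok 1 b') := by
    rw [upd1]; have : (ok 1 b').1 = b' := by simp [ok, hne]
    rw [this]
  rw [e] at h2 h3 ⊢
  exact best_step _ 1 (ok 1 b') h1 h2 h3

lemma step2 {a b c c' : Option (Fin 3)} (hne : c' ≠ some 2) (h1 : (ok 2 c').1 ≠ (ok 2 c).1)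
    (h2 : ru 2 (P a b c) < ru 2 (P a b c'))
    (h3 : ∀ t' : Hop 2, ru 2 (Function.update (P a b c) 2 t') ≤ ru 2 (P a b c')) :
    IsBest ru (P a b c) (P a b c') := by
  have e : P a b c' = Function.update (P a b c) 2 (ok 2 c') := by
    rw [upd2]; have : (ok 2 c').1 = c' := by simp [ok, hne]
    rw [this]
  rw [e] at h2 h3 ⊢
  exact best_step _ 2 (ok 2 c') h1 h2 h3

lemma T_dd1 : IsBest ru (P none none (some 1)) (P none none none) := by
  apply step2
  · decide
  · decide
  · simp [ru, P, ok]; try norm_num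
  · intro t'
    rcases hop2c t' with h | h | h <;> simp [ru, P, ok, Function.update, h] <;> try norm_num

lemma T_dd0 : IsBest ru (P none none (some 0)) (P none none none) := by
  apply step2
  · decide
  · decide
  · simp [ru, P, ok]; try norm_num
  · intro t'
    rcases hop2c t' with h | h | h <;> simp [ru, P, ok, Function.update, h] <;> try norm_num

lemma T_d0d : IsBest ru (P none (some 0) none) (P none (some 0) (some 1)) := by
  apply step2
  · decide
  · decide
  · simp [ru, P, ok]; try norm_num
  · intro t'
    rcases hop2c t' with h | h | h <;> simp [ru, P, ok, Function.update, h] <;> try norm_num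

lemma T_d01 : IsBest ru (P none (some 0) (some 1)) (P none none (some 1)) := by
  apply step1
  · decide
  · decide
  · simp [ru, P, ok]; try norm_num
  · intro t'
    rcases hop1c t' with h | h | h <;> simp [ru, P, ok, Function.update, h] <;> try norm_num

lemma T_d00 : IsBest ru (P none (some 0) (some 0)) (P none (some 0) (some 1)) := by
  apply step2
  · decide
  · decide
  · simp [ru, P, ok]; try norm_num
  · intro t'
    rcases hop2c t' with h | h | h <;> simp [ru, P, ok, Function.update, h] <;> try norm_num

lemma T_d2d : IsBest ru (P none (some 2) none) (P none none none) := by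
  apply step1
  · decide
  · decide
  · simp [ru, P, ok]; try norm_num
  · intro t'
    rcases hop1c t' with h | h | h <;> simp [ru, P, ok, Function.update, h] <;> try norm_num

lemma T_d21 : IsBest ru (P none (some 2) (some 1)) (P none none (some 1)) := by
  apply step1
  · decide
  · decide
  · simp [ru, P, ok]; try norm_num
  · intro t'
    rcases hop1c t' with h | h | h <;> simp [ru, P, ok, Function.update, h] <;> try norm_num

lemma T_d20 : IsBest ru (P none (some 2) (some 0)) (P none none (some 0)) := by
  apply step1
  · decide
  · decide
  · simp [ru, P, ok]; try norm_num
  · intro t'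
    rcases hop1c t' with h | h | h <;> simp [ru, P, ok, Function.update, h] <;> try norm_num

lemma T_2dd : IsBest ru (P (some 2) none none) (P none none none) := by
  apply step0
  · decide
  · decide
  · simp [ru, P, ok]; try norm_num
  · intro t'
    rcases hop0c t' with h | h | h <;> simp [ru, P, ok, Function.update, h] <;> try norm_num

lemma T_2d1 : IsBest ru (P (some 2) none (some 1)) (P (some 2) none none) := by
  apply step2
  · decide
  · decide
  · simp [ru, P, ok]; try norm_num
  · intro t'
    rcases hop2c t' with h | h | h <;> simp [ru, P, ok, Function.update, h] <;> try norm_num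

lemma T_2d0 : IsBest ru (P (some 2) none (some 0)) (P (some 2) none none) := by
  apply step2
  · decide
  · decide
  · simp [ru, P, ok]; try norm_num
  · intro t'
    rcases hop2c t' with h | h | h <;> simp [ru, P, ok, Function.update, h] <;> try norm_num

lemma T_20d : IsBest ru (P (some 2) (some 0) none) (P none (some 0) none) := by
  apply step0
  · decide
  · decide
  · simp [ru, P, ok]; try norm_num
  · intro t'
    rcases hop0c t' with h | h | h <;> simp [ru, P, ok, Function.update, h] <;> try norm_num

lemma T_201 : IsBest ru (P (some 2) (some 0) (some 1)) (P none (some 0) (some 1)) := by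
  apply step0
  · decide
  · decide
  · simp [ru, P, ok]; try norm_num
  · intro t'
    rcases hop0c t' with h | h | h <;> simp [ru, P, ok, Function.update, h] <;> try norm_num

lemma T_200 : IsBest ru (P (some 2) (some 0) (some 0)) (P none (some 0) (some 0)) := by
  apply step0
  · decide
  · decide
  · simp [ru, P, ok]; try norm_num
  · intro t'
    rcases hop0c t' with h | h | h <;> simp [ru, P, ok, Function.update, h] <;> try norm_num

lemma T_22d : IsBest ru (P (some 2) (some 2) none) (P (some 2) (some 0) none) := by
  apply step1
  · decide
  · decide
  · simp [ru, P, ok]; try norm_num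
  · intro t'
    rcases hop1c t' with h | h | h <;> simp [ru, P, ok, Function.update, h] <;> try norm_num

lemma T_221 : IsBest ru (P (some 2) (some 2) (some 1)) (P (some 2) none (some 1)) := by
  apply step1
  · decide
  · decide
  · simp [ru, P, ok]; try norm_num
  · intro t'
    rcases hop1c t' with h | h | h <;> simp [ru, P, ok, Function.update, h] <;> try norm_num

lemma T_220 : IsBest ru (P (some 2) (some 2) (some 0)) (P (some 2) none (some 0)) := by
  apply step1
  · decide
  · decide
  · simp [ru, P, ok]; try norm_num
  · intro t'
    rcases hop1c t' with h | h | h <;> simp [ru, P, ok, Function.update, h] <;> try norm_num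

lemma T_1d1 : IsBest ru (P (some 1) none (some 1)) (P (some 2) none (some 1)) := by
  apply step0
  · decide
  · decide
  · simp [ru, P, ok]; try norm_num
  · intro t'
    rcases hop0c t' with h | h | h <;> simp [ru, P, ok, Function.update, h] <;> try norm_num

lemma T_1dd : IsBest ru (P (some 1) none none) (P none none none) := by
  apply step0
  · decide
  · decide
  · simp [ru, P, ok]; try norm_num
  · intro t'
    rcases hop0c t' with h | h | h <;> simp [ru, P, ok, Function.update, h] <;> try norm_num

lemma T_1d0 : IsBest ru (P (some 1) none (some 0)) (P none none (some 0)) := by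
  apply step0
  · decide
  · decide
  · simp [ru, P, ok]; try norm_num
  · intro t'
    rcases hop0c t' with h | h | h <;> simp [ru, P, ok, Function.update, h] <;> try norm_num

lemma T_12d : IsBest ru (P (some 1) (some 2) none) (P none (some 2) none) := by
  apply step0
  · decide
  · decide
  · simp [ru, P, ok]; try norm_num
  · intro t'
    rcases hop0c t' with h | h | h <;> simp [ru, P, ok, Function.update, h] <;> try norm_num

lemma T_121 : IsBest ru (P (some 1) (some 2) (some 1)) (P none (some 2) (some 1)) := by
  apply step0
  · decide
  · decide
  · simp [ru, P, ok]; try norm_num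
  · intro t'
    rcases hop0c t' with h | h | h <;> simp [ru, P, ok, Function.update, h] <;> try norm_num

lemma T_120 : IsBest ru (P (some 1) (some 2) (some 0)) (P none (some 2) (some 0)) := by
  apply step0
  · decide
  · decide
  · simp [ru, P, ok]; try norm_num
  · intro t'
    rcases hop0c t' with h | h | h <;> simp [ru, P, ok, Function.update, h] <;> try norm_num

lemma T_10d : IsBest ru (P (some 1) (some 0) none) (P none (some 0) none) := by
  apply step0
  · decide
  · decide
  · simp [ru, P, ok]; try norm_num
  · intro t'
    rcases hop0c t' with h | h | h <;> simp [ru, P, ok, Function.update, h] <;> try norm_num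

lemma T_101 : IsBest ru (P (some 1) (some 0) (some 1)) (P none (some 0) (some 1)) := by
  apply step0
  · decide
  · decide
  · simp [ru, P, ok]; try norm_num
  · intro t'
    rcases hop0c t' with h | h | h <;> simp [ru, P, ok, Function.update, h] <;> try norm_num

lemma T_100 : IsBest ru (P (some 1) (some 0) (some 0)) (P none (some 0) (some 0)) := by
  apply step0
  · decide
  · decide
  · simp [ru, P, ok]; try norm_num
  · intro t'
    rcases hop0c t' with h | h | h <;> simp [ru, P, ok, Function.update, h] <;> try norm_num

lemma C4 : IsBest ru (P none none (some 1)) (P (some 2) none (some 1)) := by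
  apply step0
  · decide
  · decide
  · simp [ru, P, ok]; try norm_num
  · intro t'
    rcases hop0c t' with h | h | h <;> simp [ru, P, ok, Function.update, h] <;> try norm_num

lemma C6 : IsBest ru (P (some 2) none none) (P (some 2) (some 0) none) := by
  apply step1
  · decide
  · decide
  · simp [ru, P, ok]; try norm_num
  · intro t'
    rcases hop1c t' with h | h | h <;> simp [ru, P, ok, Function.update, h] <;> try norm_num


/-! ### Reachability of `allToD` -/

section Reach

open Relation.ReflTransGen

lemma R_ddd : Relation.ReflTransGen (IsBest ru) (P none none none) allToD :=
  P_ddd ▸ Relation.ReflTransGen.refl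

lemma R_dd1 : Relation.ReflTransGen (IsBest ru) (P none none (some 1)) allToD := head T_dd1 R_ddd
lemma R_dd0 : Relation.ReflTransGen (IsBest ru) (P none none (some 0)) allToD := head T_dd0 R_ddd
lemma R_d01 : Relation.ReflTransGen (IsBest ru) (P none (some 0) (some 1)) allToD := head T_d01 R_dd1
lemma R_d0d : Relation.ReflTransGen (IsBest ru) (P none (some 0) none) allToD := head T_d0d R_d01
lemma R_d00 : Relation.ReflTransGen (IsBest ru) (P none (some 0) (some 0)) allToD := head T_d00 R_d01
lemma R_d2d : Relation.ReflTransGen (IsBest ru) (P none (some 2) none) allToD := head T_d2d R_ddd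
lemma R_d21 : Relation.ReflTransGen (IsBest ru) (P none (some 2) (some 1)) allToD := head T_d21 R_dd1
lemma R_d20 : Relation.ReflTransGen (IsBest ru) (P none (some 2) (some 0)) allToD := head T_d20 R_dd0
lemma R_2dd : Relation.ReflTransGen (IsBest ru) (P (some 2) none none) allToD := head T_2dd R_ddd
lemma R_2d1 : Relation.ReflTransGen (IsBest ru) (P (some 2) none (some 1)) allToD := head T_2d1 R_2dd
lemma R_2d0 : Relation.ReflTransGen (IsBest ru) (P (some 2) none (some 0)) allToD := head T_2d0 R_2dd
lemma R_20d : Relation.ReflTransGen (IsBest ru) (P (some 2) (some 0) none) allToD := head T_20d R_d0d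
lemma R_201 : Relation.ReflTransGen (IsBest ru) (P (some 2) (some 0) (some 1)) allToD := head T_201 R_d01
lemma R_200 : Relation.ReflTransGen (IsBest ru) (P (some 2) (some 0) (some 0)) allToD := head T_200 R_d00
lemma R_22d : Relation.ReflTransGen (IsBest ru) (P (some 2) (some 2) none) allToD := head T_22d R_20d
lemma R_221 : Relation.ReflTransGen (IsBest ru) (P (some 2) (some 2) (some 1)) allToD := head T_221 R_2d1
lemma R_220 : Relation.ReflTransGen (IsBest ru) (P (some 2) (some 2) (some 0)) allToD := head T_220 R_2d0
lemma R_1d1 : Relation.ReflTransGen (IsBest ru) (P (some 1) none (some 1)) allToD := head T_1d1 R_2d1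
lemma R_1dd : Relation.ReflTransGen (IsBest ru) (P (some 1) none none) allToD := head T_1dd R_ddd
lemma R_1d0 : Relation.ReflTransGen (IsBest ru) (P (some 1) none (some 0)) allToD := head T_1d0 R_dd0
lemma R_12d : Relation.ReflTransGen (IsBest ru) (P (some 1) (some 2) none) allToD := head T_12d R_d2d
lemma R_121 : Relation.ReflTransGen (IsBest ru) (P (some 1) (some 2) (some 1)) allToD := head T_121 R_d21
lemma R_120 : Relation.ReflTransGen (IsBest ru) (P (some 1) (some 2) (some 0)) allToD := head T_120 R_d20
lemma R_10d : Relation.ReflTransGen (IsBest ru) (P (some 1) (some 0) none) allToD := head T_10d R_d0d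
lemma R_101 : Relation.ReflTransGen (IsBest ru) (P (some 1) (some 0) (some 1)) allToD := head T_101 R_d01
lemma R_100 : Relation.ReflTransGen (IsBest ru) (P (some 1) (some 0) (some 0)) allToD := head T_100 R_d00

lemma reach_all (s : ∀ j, Hop j) : Relation.ReflTransGen (IsBest ru) s allToD := by
  rw [ext_P s]
  rcases hop0c (s 0) with h0 | h0 | h0 <;> rcases hop1c (s 1) with h1 | h1 | h1 <;>
    rcases hop2c (s 2) with h2 | h2 | h2 <;> rw [h0, h1, h2]
  exacts [R_ddd, R_dd0, R_dd1, R_d2d, R_d20, R_d21, R_d0d, R_d00, R_d01,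
    R_1dd, R_1d0, R_1d1, R_12d, R_120, R_121, R_10d, R_100, R_101,
    R_2dd, R_2d0, R_2d1, R_22d, R_220, R_221, R_20d, R_200, R_201]

end Reach

/-! ### Nash equilibrium -/

lemma nash_allToD : IsNash ru allToD := by
  intro i t
  fin_cases i
  · rcases hop0c t with h | h | h <;>
      simp [ru, allToD, Function.update, h] <;> try norm_num
  · rcases hop1c t with h | h | h <;>
      simp [ru, allToD, Function.update, h] <;> try norm_num
  · rcases hop2c t with h | h | h <;>
      simp [ru, allToD, Function.update, h] <;> try norm_num

lemma not_nash_of_best {s s' : ∀ j, Hop j} (h : IsBest ru s s') : ¬ IsNash ru s := by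
  obtain ⟨i, e, _, hlt, _⟩ := h
  intro hN
  have hle := hN i (s' i)
  rw [← e] at hle
  exact absurd hlt (not_lt.mpr hle)

lemma nash_unique (s : ∀ j, Hop j) (hN : IsNash ru s) : s = allToD := by
  have e := ext_P s
  rw [e] at hN ⊢
  clear e
  rcases hop0c (s 0) with h0 | h0 | h0 <;> rcases hop1c (s 1) with h1 | h1 | h1 <;>
    rcases hop2c (s 2) with h2 | h2 | h2 <;> rw [h0, h1, h2] at hN ⊢
  exacts [P_ddd,
    absurd hN (not_nash_of_best T_dd0), absurd hN (not_nash_of_best T_dd1),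
    absurd hN (not_nash_of_best T_d2d), absurd hN (not_nash_of_best T_d20),
    absurd hN (not_nash_of_best T_d21), absurd hN (not_nash_of_best T_d0d),
    absurd hN (not_nash_of_best T_d00), absurd hN (not_nash_of_best T_d01),
    absurd hN (not_nash_of_best T_1dd), absurd hN (not_nash_of_best T_1d0),
    absurd hN (not_nash_of_best T_1d1), absurd hN (not_nash_of_best T_12d),
    absurd hN (not_nash_of_best T_120), absurd hN (not_nash_of_best T_121),
    absurd hN (not_nash_of_best T_10d), absurd hN (not_nash_of_best T_100),
    absurd hN (not_nash_of_best T_101), absurd hN (not_nash_of_best T_2dd),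
    absurd hN (not_nash_of_best T_2d0), absurd hN (not_nash_of_best T_2d1),
    absurd hN (not_nash_of_best T_22d), absurd hN (not_nash_of_best T_220),
    absurd hN (not_nash_of_best T_221), absurd hN (not_nash_of_best T_20d),
    absurd hN (not_nash_of_best T_200), absurd hN (not_nash_of_best T_201)]

/-! ### The best-response cycle -/

instance (i : Fin 3) : DecidableEq (Hop i) :=
  fun a b => decidable_of_iff _ Subtype.ext_iff.symm

def cyc : Fin 6 → ∀ j, Hop j
  | ⟨0, _⟩ => P (some 2) (some 0) none
  | ⟨1, _⟩ => P none (some 0) none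
  | ⟨2, _⟩ => P none (some 0) (some 1)
  | ⟨3, _⟩ => P none none (some 1)
  | ⟨4, _⟩ => P (some 2) none (some 1)
  | ⟨5, _⟩ => P (some 2) none none

lemma cyc_inj : Function.Injective cyc := by decide

lemma cyc_best : ∀ k : Fin 6, IsBest ru (cyc k) (cyc (k + 1)) := by
  intro k
  fin_cases k
  · exact T_20d
  · exact T_d0d
  · exact T_d01
  · exact C4
  · exact T_2d1
  · exact C6

theorem stmt19 :
    (∀ s, IsNash ru s ↔ s = allToD) ∧
    WeaklyAcyclicBest ru ∧
    (∃ c : Fin 6 → (∀ j, Hop j), Function.Injective c ∧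
      ∀ k : Fin 6, IsBest ru (c k) (c (k + 1))) := by
  refine ⟨fun s => ⟨nash_unique s, ?_⟩, fun s => ⟨allToD, reach_all s, nash_allToD⟩,
    cyc, cyc_inj, cyc_best⟩
  rintro rfl
  exact nash_allToD
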